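/- Let n ∈ ℕ, α > 0, and σ ∈ ℝⁿ with σ ≠ 0. Then 0 < ρ_σ < 1, and with Γ_σ := G₀ᵀ − ρ_σ E₀ Π_σ ∈ ℝ^{2n×n} one has: Γ_σ Γ_σᵀ is positive semidefinite and Γ_σ Γ_σᵀ ⪯ G₀ᵀG₀, i.e. G₀ᵀG₀ − Γ_σ Γ_σᵀ is positive semidefinite. -/

import Mathlib

open Matrix

noncomputable section

/-- Euclidean norm of a real vector. -/
def enorm {n : ℕ} (v : Fin n → ℝ) : ℝ := Real.sqrt (v ⬝ᵥ v)

/-- The block matrix `G₀ = [I_n 0] ∈ ℝ^{n×2n}`. -/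
def G0 (n : ℕ) : Matrix (Fin n) (Fin n ⊕ Fin n) ℝ := fromCols 1 0

/-- The block matrix `E₀ = [(1/2)I_n; 0] ∈ ℝ^{2n×n}`. -/
def E0 (n : ℕ) : Matrix (Fin n ⊕ Fin n) (Fin n) ℝ := fromRows ((2 : ℝ)⁻¹ • 1) 0

/-- The scalar gain `c(σ) = 1/√‖σ‖ + α`. -/
def cfun {n : ℕ} (α : ℝ) (σ : Fin n → ℝ) : ℝ := 1 / Real.sqrt (enorm σ) + α

/-- The scalar `ρ_σ = 1/(c(σ)√‖σ‖)`. -/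
def rhoSigma {n : ℕ} (α : ℝ) (σ : Fin n → ℝ) : ℝ := 1 / (cfun α σ * Real.sqrt (enorm σ))

/-- The rank-one projection `Π_σ = (σ/‖σ‖)(σ/‖σ‖)ᵀ`. -/
def PiSigma {n : ℕ} (σ : Fin n → ℝ) : Matrix (Fin n) (Fin n) ℝ :=
  vecMulVec ((_root_.enorm σ)⁻¹ • σ) ((_root_.enorm σ)⁻¹ • σ)

/-- A nonnegative multiple of a real rank-one `v vᵀ` is PSD. -/
lemma psd_smul_vecMulVec {n : ℕ} (k : ℝ) (hk : 0 ≤ k) (v : Fin n → ℝ) :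
    (k • vecMulVec v v).PosSemidef := by
  rw [posSemidef_iff_dotProduct_mulVec]
  constructor
  · ext i j
    simp [conjTranspose_apply, vecMulVec_apply, mul_comm]
  · intro x
    have hkey : (star x) ⬝ᵥ (k • vecMulVec v v) *ᵥ x = k * ((v ⬝ᵥ x) * (v ⬝ᵥ x)) := by
      simp only [star_trivial, dotProduct, mulVec, Matrix.smul_apply, vecMulVec_apply, smul_eq_mul,
        Finset.mul_sum, Finset.sum_mul]
      refine Finset.sum_congr rfl fun i _ => Finset.sum_congr rfl fun j _ => by ring
    rw [hkey]
    exact mul_nonneg hk (mul_self_nonneg _)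

/-- Inequality (37) of the paper: `0 < ρ_σ < 1`, `Γ_σΓ_σᵀ ⪰ 0` and `Γ_σΓ_σᵀ ⪯ G₀ᵀG₀`. -/
theorem stmt2 {n : ℕ} (α : ℝ) (hα : 0 < α) (σ : Fin n → ℝ) (hσ : σ ≠ 0) :
    0 < rhoSigma α σ ∧ rhoSigma α σ < 1 ∧
    (((G0 n)ᵀ - rhoSigma α σ • (E0 n * PiSigma σ)) *
      ((G0 n)ᵀ - rhoSigma α σ • (E0 n * PiSigma σ))ᵀ).PosSemidef ∧
    ((G0 n)ᵀ * G0 n -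
      ((G0 n)ᵀ - rhoSigma α σ • (E0 n * PiSigma σ)) *
      ((G0 n)ᵀ - rhoSigma α σ • (E0 n * PiSigma σ))ᵀ).PosSemidef := by
  -- scalar preliminaries
  have hdd : 0 < σ ⬝ᵥ σ := by
    rcases Function.ne_iff.mp hσ with ⟨i, hi⟩
    have hle : σ i * σ i ≤ σ ⬝ᵥ σ := by
      have := Finset.single_le_sum (f := fun j => σ j * σ j)
        (fun j _ => mul_self_nonneg (σ j)) (Finset.mem_univ i)
      simpa [dotProduct] using this
    have hpos : 0 < σ i * σ i := mul_self_pos.mpr hi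
    linarith
  have hs : 0 < _root_.enorm σ := Real.sqrt_pos.mpr hdd
  have hss : 0 < Real.sqrt (enorm σ) := Real.sqrt_pos.mpr hs
  have hcs : cfun α σ * Real.sqrt (enorm σ) = 1 + α * Real.sqrt (enorm σ) := by
    rw [cfun, add_mul, one_div, inv_mul_cancel₀ hss.ne']
  have hden : (0:ℝ) < 1 + α * Real.sqrt (enorm σ) := by positivity
  have hρeq : rhoSigma α σ = 1 / (1 + α * Real.sqrt (enorm σ)) := by
    rw [rhoSigma, hcs]
  have hρpos : 0 < rhoSigma α σ := by rw [hρeq]; positivity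
  have hρlt : rhoSigma α σ < 1 := by
    rw [hρeq, div_lt_one hden]
    nlinarith
  set ρ : ℝ := rhoSigma α σ with hρ
  set v : Fin n → ℝ := (_root_.enorm σ)⁻¹ • σ with hv
  have hee : _root_.enorm σ * _root_.enorm σ = σ ⬝ᵥ σ := Real.mul_self_sqrt hdd.le
  have hvv : v ⬝ᵥ v = 1 := by
    rw [hv, smul_dotProduct, dotProduct_smul, smul_eq_mul, smul_eq_mul, ← hee]
    field_simp
  set P : Matrix (Fin n) (Fin n) ℝ := PiSigma σ with hP
  -- projection facts
  have hPP : P * P = P := by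
    rw [hP, PiSigma, ← hv]
    ext i j
    simp only [mul_apply, vecMulVec_apply]
    have h1 : ∀ k, (v i * v k) * (v k * v j) = (v i * v j) * (v k * v k) := by
      intro k; ring
    rw [Finset.sum_congr rfl fun k _ => h1 k, ← Finset.mul_sum]
    have h2 : ∑ k, v k * v k = v ⬝ᵥ v := rfl
    rw [h2, hvv, mul_one]
  have hPt : Pᵀ = P := by
    rw [hP, PiSigma]
    ext i j; simp [transpose_apply, vecMulVec_apply, mul_comm]; ring
  -- E0 in terms of G0
  have hE : E0 n = (2:ℝ)⁻¹ • (G0 n)ᵀ := by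
    rw [E0, G0, transpose_fromCols]
    ext i j
    cases i <;> simp
  set M : Matrix (Fin n) (Fin n) ℝ := 1 - (ρ/2) • P with hM
  -- Γ = G0ᵀ * M
  have hΓ : (G0 n)ᵀ - ρ • (E0 n * P) = (G0 n)ᵀ * M := by
    rw [hM, Matrix.mul_sub, Matrix.mul_one, Matrix.mul_smul, hE, Matrix.smul_mul,
      smul_smul, show ρ * 2⁻¹ = ρ / 2 by ring]
  have hMt : Mᵀ = M := by
    rw [hM, transpose_sub, transpose_smul, transpose_one, hPt]
  have hMM : M * M = 1 - (ρ - ρ^2/4) • P := by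
    rw [hM]
    simp only [Matrix.sub_mul, Matrix.mul_sub, Matrix.one_mul, Matrix.mul_one,
      Matrix.smul_mul, Matrix.mul_smul, smul_smul, hPP]
    ext i j
    simp only [Matrix.sub_apply, Matrix.smul_apply, smul_eq_mul]
    ring
  have hΓt : ((G0 n)ᵀ * M)ᵀ = M * G0 n := by
    rw [transpose_mul, transpose_transpose, hMt]
  have hΓΓ : ((G0 n)ᵀ - ρ • (E0 n * P)) * ((G0 n)ᵀ - ρ • (E0 n * P))ᵀ
      = (G0 n)ᵀ * (M * M) * G0 n := by
    rw [hΓ, hΓt, Matrix.mul_assoc, Matrix.mul_assoc, Matrix.mul_assoc]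
  have hGconj : (G0 n)ᵀ = (G0 n)ᴴ := (conjTranspose_eq_transpose_of_trivial _).symm
  refine ⟨hρpos, hρlt, ?_, ?_⟩
  · -- Γ Γᵀ = Γ Γᴴ is PSD
    have : ((G0 n)ᵀ - ρ • (E0 n * P))ᵀ = ((G0 n)ᵀ - ρ • (E0 n * P))ᴴ :=
      (conjTranspose_eq_transpose_of_trivial _).symm
    rw [this]
    exact posSemidef_self_mul_conjTranspose _
  · rw [hΓΓ, hMM]
    have key : (G0 n)ᵀ * G0 n - (G0 n)ᵀ * (1 - (ρ - ρ^2/4) • P) * G0 n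
        = (G0 n)ᵀ * ((ρ - ρ^2/4) • P) * G0 n := by
      rw [show (G0 n)ᵀ * G0 n = (G0 n)ᵀ * (1 : Matrix (Fin n) (Fin n) ℝ) * G0 n by
        rw [Matrix.mul_one],
        ← Matrix.sub_mul, ← Matrix.mul_sub, sub_sub_cancel]
    rw [key]
    have hk0 : 0 ≤ ρ - ρ^2/4 := by nlinarith
    have hpsd : ((ρ - ρ^2/4) • P).PosSemidef := by
      rw [hP, PiSigma, ← hv]; exact psd_smul_vecMulVec _ hk0 v
    have h := hpsd.mul_mul_conjTranspose_same ((G0 n)ᵀ)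
    rw [conjTranspose_eq_transpose_of_trivial, transpose_transpose] at h
    exact h
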